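/- (Datko-type theorem for weak exponential instability) Let X be a Banach space and let U be an evolution operator on X with exponential decay. Then U is weakly exponentially unstable if and only if there exist p ≥ 1 and K > 0 such that for each x₀ ∈ X there exists t₀ ≥ 0 with ∫_{t₀}^{t} ‖U(τ,t₀)x₀‖^p dτ ≤ K‖U(t,t₀)x₀‖^p for all t ≥ t₀. -/

import Mathlib

/-- An evolution operator on a Banach space `X`. -/
structure EvolutionOperator (X : Type*) [NormedAddCommGroup X] [NormedSpace ℝ X] where
  U : ℝ → ℝ → X →L[ℝ] X
  isId : ∀ t : ℝ, 0 ≤ t → U t t = ContinuousLinearMap.id ℝ X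
  cocycle : ∀ t s t₀ : ℝ, 0 ≤ t₀ → t₀ ≤ s → s ≤ t → ∀ x : X, U t s (U s t₀ x) = U t t₀ x
  cont : ∀ x : X, ContinuousOn (fun p : ℝ × ℝ => U p.1 p.2 x)
    {p : ℝ × ℝ | 0 ≤ p.2 ∧ p.2 ≤ p.1}

/-- `U` is weakly exponentially unstable. -/
def WeakExpUnstable {X : Type*} [NormedAddCommGroup X] [NormedSpace ℝ X]
    (E : EvolutionOperator X) : Prop :=
  ∃ N : ℝ, 1 ≤ N ∧ ∃ ν : ℝ, 0 < ν ∧ ∀ x₀ : X, ∃ t₀ : ℝ, 0 ≤ t₀ ∧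
    ∀ s t : ℝ, t₀ ≤ s → s ≤ t →
      N * ‖E.U t t₀ x₀‖ ≥ Real.exp (ν * (t - s)) * ‖E.U s t₀ x₀‖

/-- `U` has exponential decay. -/
def ExpDecay {X : Type*} [NormedAddCommGroup X] [NormedSpace ℝ X]
    (E : EvolutionOperator X) : Prop :=
  ∃ M : ℝ, 1 ≤ M ∧ ∃ ω : ℝ, 0 < ω ∧ ∀ t t₀ : ℝ, 0 ≤ t₀ → t₀ ≤ t → ∀ x₀ : X,
    M * ‖E.U t t₀ x₀‖ ≥ Real.exp (-ω * (t - t₀)) * ‖x₀‖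

section DatkoAux

open Real MeasureTheory Set

variable {X : Type*} [NormedAddCommGroup X] [NormedSpace ℝ X]

lemma EvolutionOperator.contOn_norm (E : EvolutionOperator X) (x₀ : X) {t₀ : ℝ} (ht₀ : 0 ≤ t₀) :
    ContinuousOn (fun τ => ‖E.U τ t₀ x₀‖) (Set.Ici t₀) := by
  have h := E.cont x₀
  have hmap : ContinuousOn (fun τ : ℝ => ((τ, t₀) : ℝ × ℝ)) (Set.Ici t₀) :=
    (continuous_id.prodMk continuous_const).continuousOn
  exact (h.comp hmap (fun τ hτ => ⟨ht₀, hτ⟩)).norm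

lemma EvolutionOperator.integrable_rpow (E : EvolutionOperator X) (x₀ : X) {t₀ a b p : ℝ}
    (ht₀ : 0 ≤ t₀) (hp : 0 ≤ p) (ha : t₀ ≤ a) (hab : a ≤ b) :
    IntervalIntegrable (fun τ => ‖E.U τ t₀ x₀‖ ^ p) volume a b := by
  apply ContinuousOn.intervalIntegrable
  apply ContinuousOn.rpow_const
  · refine (E.contOn_norm x₀ ht₀).mono ?_
    rw [uIcc_of_le hab]
    exact fun x hx => ha.trans hx.1
  · exact fun x _ => Or.inr hp

lemma decay_trans (E : EvolutionOperator X) {M ω : ℝ}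
    (hdec : ∀ t t₀ : ℝ, 0 ≤ t₀ → t₀ ≤ t → ∀ x₀ : X,
      M * ‖E.U t t₀ x₀‖ ≥ Real.exp (-ω * (t - t₀)) * ‖x₀‖)
    {t₀ s t : ℝ} (h0 : 0 ≤ t₀) (hs : t₀ ≤ s) (ht : s ≤ t) (x₀ : X) :
    ‖E.U s t₀ x₀‖ ≤ M * Real.exp (ω * (t - s)) * ‖E.U t t₀ x₀‖ := by
  have h := hdec t s (h0.trans hs) ht (E.U s t₀ x₀)
  rw [E.cocycle t s t₀ h0 hs ht x₀, ge_iff_le] at h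
  have h2 := mul_le_mul_of_nonneg_left h (Real.exp_pos (ω * (t - s))).le
  calc ‖E.U s t₀ x₀‖
      = Real.exp (ω * (t - s)) * (Real.exp (-ω * (t - s)) * ‖E.U s t₀ x₀‖) := by
        rw [← mul_assoc, ← Real.exp_add]
        have : ω * (t - s) + -ω * (t - s) = 0 := by ring
        rw [this, Real.exp_zero, one_mul]
    _ ≤ Real.exp (ω * (t - s)) * (M * ‖E.U t t₀ x₀‖) := h2
    _ = M * Real.exp (ω * (t - s)) * ‖E.U t t₀ x₀‖ := by ring

lemma forward_dir (E : EvolutionOperator X) {N ν : ℝ} (hN : 1 ≤ N) (hν : 0 < ν)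
    (h : ∀ x₀ : X, ∃ t₀ : ℝ, 0 ≤ t₀ ∧ ∀ s t : ℝ, t₀ ≤ s → s ≤ t →
      N * ‖E.U t t₀ x₀‖ ≥ Real.exp (ν * (t - s)) * ‖E.U s t₀ x₀‖) :
    ∃ p : ℝ, 1 ≤ p ∧ ∃ K : ℝ, 0 < K ∧ ∀ x₀ : X, ∃ t₀ : ℝ, 0 ≤ t₀ ∧
      ∀ t : ℝ, t₀ ≤ t → (∫ τ in t₀..t, ‖E.U τ t₀ x₀‖ ^ p) ≤ K * ‖E.U t t₀ x₀‖ ^ p := by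
  have hN0 : (0:ℝ) < N := lt_of_lt_of_le one_pos hN
  refine ⟨1, le_rfl, N / ν, div_pos hN0 hν, fun x₀ => ?_⟩
  obtain ⟨t₀, ht₀, hineq⟩ := h x₀
  refine ⟨t₀, ht₀, fun t ht => ?_⟩
  simp only [Real.rpow_one]
  have hfint : IntervalIntegrable (fun τ => ‖E.U τ t₀ x₀‖) volume t₀ t := by
    apply ContinuousOn.intervalIntegrable
    refine (E.contOn_norm x₀ ht₀).mono ?_
    rw [uIcc_of_le ht]; exact fun x hx => hx.1
  have hgc : Continuous fun τ => N * ‖E.U t t₀ x₀‖ * Real.exp (ν * (τ - t)) := by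
    continuity
  have hgint : IntervalIntegrable (fun τ => N * ‖E.U t t₀ x₀‖ * Real.exp (ν * (τ - t)))
      volume t₀ t := hgc.intervalIntegrable t₀ t
  have hmono : ∀ τ ∈ Icc t₀ t,
      ‖E.U τ t₀ x₀‖ ≤ N * ‖E.U t t₀ x₀‖ * Real.exp (ν * (τ - t)) := by
    intro τ hτ
    have h1 := hineq τ t hτ.1 hτ.2
    rw [ge_iff_le] at h1
    have h2 := mul_le_mul_of_nonneg_left h1 (Real.exp_pos (ν * (τ - t))).le
    calc ‖E.U τ t₀ x₀‖
        = Real.exp (ν * (τ - t)) * (Real.exp (ν * (t - τ)) * ‖E.U τ t₀ x₀‖) := by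
          rw [← mul_assoc, ← Real.exp_add]
          have : ν * (τ - t) + ν * (t - τ) = 0 := by ring
          rw [this, Real.exp_zero, one_mul]
      _ ≤ Real.exp (ν * (τ - t)) * (N * ‖E.U t t₀ x₀‖) := h2
      _ = N * ‖E.U t t₀ x₀‖ * Real.exp (ν * (τ - t)) := by ring
  have hIexp : ∫ τ in t₀..t, Real.exp (ν * (τ - t)) =
      Real.exp (ν * (t - t)) / ν - Real.exp (ν * (t₀ - t)) / ν := by
    have hd : ∀ τ ∈ uIcc t₀ t, HasDerivAt (fun τ => Real.exp (ν * (τ - t)) / ν)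
        (Real.exp (ν * (τ - t))) τ := by
      intro τ _
      have h1 : HasDerivAt (fun τ : ℝ => ν * (τ - t)) ν τ := by
        simpa using ((hasDerivAt_id τ).sub_const t).const_mul ν
      have h2 := h1.exp.div_const ν
      convert h2 using 1
      all_goals first | rfl | field_simp
    exact intervalIntegral.integral_eq_sub_of_hasDerivAt hd
      ((by continuity : Continuous fun τ => Real.exp (ν * (τ - t))).intervalIntegrable t₀ t)
  calc (∫ τ in t₀..t, ‖E.U τ t₀ x₀‖)
      ≤ ∫ τ in t₀..t, N * ‖E.U t t₀ x₀‖ * Real.exp (ν * (τ - t)) :=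
        intervalIntegral.integral_mono_on ht hfint hgint hmono
    _ = N * ‖E.U t t₀ x₀‖ *
        (Real.exp (ν * (t - t)) / ν - Real.exp (ν * (t₀ - t)) / ν) := by
        rw [intervalIntegral.integral_const_mul, hIexp]
    _ ≤ N * ‖E.U t t₀ x₀‖ * (1 / ν) := by
        apply mul_le_mul_of_nonneg_left _ (by positivity)
        have h3 : Real.exp (ν * (t - t)) = 1 := by rw [sub_self, mul_zero, Real.exp_zero]
        rw [h3]
        have h4 : 0 < Real.exp (ν * (t₀ - t)) / ν := div_pos (Real.exp_pos _) hν
        linarith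
    _ = N / ν * ‖E.U t t₀ x₀‖ := by ring

lemma reverse_dir (E : EvolutionOperator X) {M ω : ℝ} (hM : 1 ≤ M) (hω : 0 < ω)
    (hdec : ∀ t t₀ : ℝ, 0 ≤ t₀ → t₀ ≤ t → ∀ x₀ : X,
      M * ‖E.U t t₀ x₀‖ ≥ Real.exp (-ω * (t - t₀)) * ‖x₀‖)
    {p K : ℝ} (hp : 1 ≤ p) (hK : 0 < K)
    (h : ∀ x₀ : X, ∃ t₀ : ℝ, 0 ≤ t₀ ∧ ∀ t : ℝ, t₀ ≤ t →
      (∫ τ in t₀..t, ‖E.U τ t₀ x₀‖ ^ p) ≤ K * ‖E.U t t₀ x₀‖ ^ p) :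
    ∃ N : ℝ, 1 ≤ N ∧ ∃ ν : ℝ, 0 < ν ∧ ∀ x₀ : X, ∃ t₀ : ℝ, 0 ≤ t₀ ∧
      ∀ s t : ℝ, t₀ ≤ s → s ≤ t →
        N * ‖E.U t t₀ x₀‖ ≥ Real.exp (ν * (t - s)) * ‖E.U s t₀ x₀‖ := by
  have hp0 : (0:ℝ) < p := lt_of_lt_of_le one_pos hp
  have hM0 : (0:ℝ) < M := lt_of_lt_of_le one_pos hM
  set A : ℝ := M * Real.exp ω with hA
  have hA0 : 0 < A := by positivity
  have hA1 : 1 ≤ A := one_le_mul_of_one_le_of_one_le hM (Real.one_le_exp hω.le)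
  set L : ℝ := max A ((K * A ^ p) ^ (1/p)) with hL
  have hL1 : 1 ≤ L := le_trans hA1 (le_max_left _ _)
  have hL0 : 0 < L := lt_of_lt_of_le one_pos hL1
  set δ : ℝ := K * L ^ p * Real.exp p with hδ
  have hLp : (0:ℝ) < L ^ p := Real.rpow_pos_of_pos hL0 p
  have hδ0 : 0 < δ := by
    apply mul_pos (mul_pos hK hLp) (Real.exp_pos p)
  have he1 : (1:ℝ) ≤ Real.exp 1 := Real.one_le_exp one_pos.le
  refine ⟨L * Real.exp 1, le_trans hL1 (le_mul_of_one_le_right hL0.le he1),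
    1/δ, by positivity, fun x₀ => ?_⟩
  obtain ⟨t₀, ht₀, hdk⟩ := h x₀
  refine ⟨t₀, ht₀, fun s t hs hst => ?_⟩
  set f : ℝ → ℝ := fun τ => ‖E.U τ t₀ x₀‖ with hf
  have hf0 : ∀ τ, 0 ≤ f τ := fun τ => norm_nonneg _
  have hint : ∀ a b, t₀ ≤ a → a ≤ b → IntervalIntegrable (fun τ => f τ ^ p) volume a b :=
    fun a b ha hab => E.integrable_rpow x₀ ht₀ hp0.le ha hab
  -- Step C : uniform comparison
  have hC : ∀ u v, t₀ ≤ u → u ≤ v → f u ≤ L * f v := by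
    intro u v hu huv
    rcases le_total v (u + 1) with hcase | hcase
    · calc f u ≤ M * Real.exp (ω * (v - u)) * f v := decay_trans E hdec ht₀ hu huv x₀
        _ ≤ A * f v := by
            apply mul_le_mul_of_nonneg_right _ (hf0 v)
            apply mul_le_mul_of_nonneg_left _ hM0.le
            exact Real.exp_le_exp.mpr (by nlinarith)
        _ ≤ L * f v := mul_le_mul_of_nonneg_right (le_max_left _ _) (hf0 v)
    · -- long interval : u + 1 ≤ v
      have h1 : ∀ τ ∈ Icc u (u+1), (f u / A) ^ p ≤ f τ ^ p := by
        intro τ hτ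
        apply Real.rpow_le_rpow (by positivity) _ hp0.le
        rw [div_le_iff₀ hA0]
        calc f u ≤ M * Real.exp (ω * (τ - u)) * f τ :=
              decay_trans E hdec ht₀ hu hτ.1 x₀
          _ ≤ A * f τ := by
              apply mul_le_mul_of_nonneg_right _ (hf0 τ)
              apply mul_le_mul_of_nonneg_left _ hM0.le
              exact Real.exp_le_exp.mpr (by nlinarith [hτ.1, hτ.2])
          _ = f τ * A := by ring
      have h4 : (f u / A) ^ p ≤ ∫ τ in u..(u+1), f τ ^ p := by
        have h4' := intervalIntegral.integral_mono_on (by linarith : u ≤ u + 1)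
          intervalIntegrable_const (hint u (u+1) hu (by linarith)) h1
        simpa using h4'
      have h5 : (∫ τ in u..(u+1), f τ ^ p) ≤ ∫ τ in t₀..v, f τ ^ p := by
        have huv' : u ≤ v := by linarith
        have e1 := intervalIntegral.integral_add_adjacent_intervals
          (hint t₀ u le_rfl hu) (hint u v hu huv')
        have e2 := intervalIntegral.integral_add_adjacent_intervals
          (hint u (u+1) hu (by linarith)) (hint (u+1) v (by linarith) hcase)
        have pos1 : 0 ≤ ∫ τ in t₀..u, f τ ^ p :=
          intervalIntegral.integral_nonneg hu (fun τ _ => Real.rpow_nonneg (hf0 τ) p)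
        have pos2 : 0 ≤ ∫ τ in (u+1)..v, f τ ^ p :=
          intervalIntegral.integral_nonneg hcase (fun τ _ => Real.rpow_nonneg (hf0 τ) p)
        linarith
      have h6 := hdk v (le_trans hu (by linarith))
      have h7 : (f u / A) ^ p ≤ K * f v ^ p := le_trans h4 (le_trans h5 h6)
      have h8 : f u ^ p ≤ ((K * A ^ p) ^ (1/p) * f v) ^ p := by
        rw [Real.div_rpow (hf0 u) hA0.le] at h7
        have hAp : (0:ℝ) < A ^ p := Real.rpow_pos_of_pos hA0 p
        have h7' : f u ^ p ≤ K * A ^ p * f v ^ p := by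
          rw [div_le_iff₀ hAp] at h7
          calc f u ^ p ≤ K * f v ^ p * A ^ p := h7
            _ = K * A ^ p * f v ^ p := by ring
        have e3 : ((K * A ^ p) ^ (1/p) * f v) ^ p = K * A ^ p * f v ^ p := by
          rw [Real.mul_rpow (Real.rpow_nonneg (by positivity) _) (hf0 v),
            ← Real.rpow_mul (by positivity : (0:ℝ) ≤ K * A ^ p),
            one_div_mul_cancel hp0.ne', Real.rpow_one]
        rw [e3]
        exact h7'
      have h9 : f u ≤ (K * A ^ p) ^ (1/p) * f v :=
        (Real.rpow_le_rpow_iff (hf0 u) (by positivity) hp0).mp h8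
      exact le_trans h9 (mul_le_mul_of_nonneg_right (le_max_right _ _) (hf0 v))
  -- Step D/E : one exponential step of length δ
  have hstep : ∀ u, t₀ ≤ u → Real.exp 1 * f u ≤ f (u + δ) := by
    intro u hu
    have huv : u ≤ u + δ := by linarith
    have h1 : ∀ τ ∈ Icc u (u + δ), (f u / L) ^ p ≤ f τ ^ p := by
      intro τ hτ
      apply Real.rpow_le_rpow (by positivity) _ hp0.le
      rw [div_le_iff₀ hL0]
      have := hC u τ hu hτ.1
      linarith
    have h2 : δ * (f u / L) ^ p ≤ ∫ τ in u..(u + δ), f τ ^ p := by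
      have h2' := intervalIntegral.integral_mono_on huv
        intervalIntegrable_const (hint u (u + δ) hu huv) h1
      simpa using h2'
    have h3 : (∫ τ in u..(u + δ), f τ ^ p) ≤ K * f (u + δ) ^ p := by
      refine le_trans ?_ (hdk (u + δ) (le_trans hu huv))
      have e1 := intervalIntegral.integral_add_adjacent_intervals
        (hint t₀ u le_rfl hu) (hint u (u + δ) hu huv)
      have pos1 : 0 ≤ ∫ τ in t₀..u, f τ ^ p :=
        intervalIntegral.integral_nonneg hu (fun τ _ => Real.rpow_nonneg (hf0 τ) p)
      linarith
    have key : δ * (f u / L) ^ p = K * (Real.exp 1 * f u) ^ p := by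
      rw [Real.div_rpow (hf0 u) hL0.le,
        Real.mul_rpow (Real.exp_pos 1).le (hf0 u), Real.exp_one_rpow, hδ]
      field_simp
    have h4 : K * (Real.exp 1 * f u) ^ p ≤ K * f (u + δ) ^ p := by
      rw [← key]; exact le_trans h2 h3
    have h5 : (Real.exp 1 * f u) ^ p ≤ f (u + δ) ^ p :=
      le_of_mul_le_mul_left h4 hK
    exact (Real.rpow_le_rpow_iff (by positivity) (hf0 _) hp0).mp h5
  -- Step F : iteration
  have hiter : ∀ n : ℕ, ∀ u, t₀ ≤ u → Real.exp n * f u ≤ f (u + n * δ) := by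
    intro n
    induction n with
    | zero => intro u hu; simp
    | succ n ih =>
      intro u hu
      have hnd : (0:ℝ) ≤ (n:ℝ) * δ := mul_nonneg (Nat.cast_nonneg n) hδ0.le
      have h1 := hstep (u + n * δ) (by linarith)
      have h2 := ih u hu
      have e : u + ((n:ℕ)+1 : ℕ) * δ = (u + (n:ℝ) * δ) + δ := by push_cast; ring
      rw [e]
      calc Real.exp (((n:ℕ)+1 : ℕ) : ℝ) * f u
          = Real.exp 1 * (Real.exp n * f u) := by
            push_cast
            rw [Real.exp_add]
            ring
        _ ≤ Real.exp 1 * f (u + n * δ) :=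
            mul_le_mul_of_nonneg_left h2 (Real.exp_pos 1).le
        _ ≤ f ((u + n * δ) + δ) := h1
  -- Final assembly
  set n : ℕ := ⌊(t - s) / δ⌋₊ with hn
  have hts0 : (0:ℝ) ≤ (t - s) / δ := div_nonneg (by linarith) hδ0.le
  have hn1 : (n:ℝ) ≤ (t - s) / δ := Nat.floor_le hts0
  have hn2 : (t - s) / δ < n + 1 := Nat.lt_floor_add_one _
  have hnd : (0:ℝ) ≤ (n:ℝ) * δ := mul_nonneg (Nat.cast_nonneg n) hδ0.le
  have hsn : s + n * δ ≤ t := by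
    have h1 := mul_le_mul_of_nonneg_right hn1 hδ0.le
    rw [div_mul_cancel₀ _ hδ0.ne'] at h1
    linarith
  have key1 : Real.exp n * f s ≤ f (s + n * δ) := hiter n s hs
  have key2 : f (s + n * δ) ≤ L * f t := hC (s + n * δ) t (by linarith) hsn
  have hexp : Real.exp (1 / δ * (t - s)) ≤ Real.exp 1 * Real.exp n := by
    rw [← Real.exp_add]
    apply Real.exp_le_exp.mpr
    have e : 1 / δ * (t - s) = (t - s) / δ := by ring
    rw [e]
    linarith
  rw [ge_iff_le]
  calc Real.exp (1 / δ * (t - s)) * f s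
      ≤ (Real.exp 1 * Real.exp n) * f s :=
        mul_le_mul_of_nonneg_right hexp (hf0 s)
    _ = Real.exp 1 * (Real.exp n * f s) := by ring
    _ ≤ Real.exp 1 * f (s + n * δ) :=
        mul_le_mul_of_nonneg_left key1 (Real.exp_pos 1).le
    _ ≤ Real.exp 1 * (L * f t) :=
        mul_le_mul_of_nonneg_left key2 (Real.exp_pos 1).le
    _ = L * Real.exp 1 * f t := by ring

end DatkoAux

/-- Datko-type theorem for weak exponential instability. -/
theorem weakExpUnstable_iff_datko
    {X : Type*} [NormedAddCommGroup X] [NormedSpace ℝ X] [CompleteSpace X]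
    (E : EvolutionOperator X) (hdecay : ExpDecay E) :
    WeakExpUnstable E ↔
      ∃ p : ℝ, 1 ≤ p ∧ ∃ K : ℝ, 0 < K ∧ ∀ x₀ : X, ∃ t₀ : ℝ, 0 ≤ t₀ ∧
        ∀ t : ℝ, t₀ ≤ t →
          (∫ τ in t₀..t, ‖E.U τ t₀ x₀‖ ^ p) ≤ K * ‖E.U t t₀ x₀‖ ^ p := by
  obtain ⟨M, hM, ω, hω, hdec⟩ := hdecay
  constructor
  · rintro ⟨N, hN, ν, hν, hw⟩
    exact forward_dir E hN hν hw
  · rintro ⟨p, hp, K, hK, hh⟩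
    exact reverse_dir E hM hω hdec hp hK hh
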